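/- arXiv:2109.08772 — 6 statements merged into one kernel-verified Lean document; each statement's English description precedes it below -/
import Mathlib

section
/- Let R be a commutative ring, J an ideal, and L ⊆ M R-modules. The J-basically full closure is idempotent: (J•(J•L :_M J) :_M J) = (J•L :_M J). -/
/-- The colon submodule `(L :_M J) = {x ∈ M : J • x ⊆ L}`. -/
def Submodule.icolon {R M : Type*} [CommRing R] [AddCommGroup M] [Module R M]
    (L : Submodule R M) (J : Ideal R) : Submodule R M where
  carrier := {x | ∀ r ∈ J, r • x ∈ L}
  add_mem' := fun {a b} ha hb r hr => by
    rw [smul_add]; exact L.add_mem (ha r hr) (hb r hr)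
  zero_mem' := fun r hr => by simp
  smul_mem' := fun c x hx r hr => by
    rw [smul_comm]; exact L.smul_mem c (hx r hr)

lemma smul_icolon_le {R M : Type*} [CommRing R] [AddCommGroup M] [Module R M]
    (J : Ideal R) (L : Submodule R M) : J • ((J • L).icolon J) ≤ J • L := by
  refine Submodule.smul_le.mpr fun r hr x hx => ?_
  exact hx r hr

/-- The J-basically full closure is idempotent. -/
theorem jbf_idempotent {R M : Type*} [CommRing R] [AddCommGroup M] [Module R M]
    (J : Ideal R) (L : Submodule R M) :
    (J • ((J • L).icolon J)).icolon J = (J • L).icolon J := by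
  apply le_antisymm
  · intro x hx r hr
    exact smul_icolon_le J L (hx r hr)
  · intro x hx r hr
    have hle : J • L ≤ J • ((J • L).icolon J) := by
      refine smul_mono_right J (fun y hy s hs => ?_)
      exact Submodule.smul_mem_smul hs hy
    exact hle (hx r hr)
end

section
/- Let (R,m) be a Noetherian local ring, J a finitely generated ideal, and L ⊆ N ⊆ M finitely generated R-modules. If N ⊆ (J•(L + m•N) :_M J), then N ⊆ (J•L :_M J). (That is, J-basically full closure is a Nakayama closure.) -/
/-- J-basically full closure is a Nakayama closure on finitely generated modules
over a Noetherian local ring. -/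
theorem jbf_nakayama {R M : Type*} [CommRing R] [IsNoetherianRing R] [IsLocalRing R]
    [AddCommGroup M] [Module R M] [Module.Finite R M]
    (J : Ideal R) (hJ : J.FG) (L N : Submodule R M) (hLN : L ≤ N)
    (h : N ≤ (J • (L ⊔ IsLocalRing.maximalIdeal R • N)).icolon J) :
    N ≤ (J • L).icolon J := by
  have hNoeth : IsNoetherian R M := isNoetherian_of_isNoetherianRing_of_finite R M
  have key : J • N ≤ J • L ⊔ IsLocalRing.maximalIdeal R • (J • N) := by
    have : J • N ≤ J • (L ⊔ IsLocalRing.maximalIdeal R • N) := by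
      apply Submodule.smul_le.2
      intro r hr x hx
      exact h hx r hr
    refine this.trans ?_
    rw [Submodule.smul_sup, smul_comm]
  have fg : (J • N).FG := IsNoetherian.noetherian _
  have hm : (IsLocalRing.maximalIdeal R) ≤ Ideal.jacobson ⊥ := by
    rw [IsLocalRing.jacobson_eq_maximalIdeal]
    exact bot_ne_top
  have := Submodule.le_of_le_smul_of_le_jacobson_bot fg hm key
  intro x hx r hr
  exact this (Submodule.smul_mem_smul hr hx)
end

section
/- Let R be a commutative ring, J an ideal, and L ⊆ M R-modules. Then the J-basically empty interior is idempotent: J•(J•(L :_M J) :_M J) = J•(L :_M J). -/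
/-- The J-basically empty interior is idempotent. -/
theorem jbe_idempotent {R M : Type*} [CommRing R] [AddCommGroup M] [Module R M]
    (J : Ideal R) (L : Submodule R M) :
    J • ((J • (L.icolon J)).icolon J) = J • (L.icolon J) := by
  apply le_antisymm
  · exact Submodule.smul_le.mpr fun r hr y hy => hy r hr
  · refine Submodule.smul_le.mpr fun r hr y hy => ?_
    exact Submodule.smul_mem_smul hr fun s hs => Submodule.smul_mem_smul hs hy
end

section
/- In R = k[[x,y]] with m = (x,y), the ideal I = (x³, x²y², y³) satisfies (m²·I :_R m²) = m³, which strictly contains I, while (m·I :_R m) = I. -/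
open MvPowerSeries Finsupp

namespace BFaux

noncomputable section
variable {k : Type*} [Field k]

def E (a b : ℕ) : Fin 2 →₀ ℕ := Finsupp.single 0 a + Finsupp.single 1 b

@[simp] lemma E_apply0 (a b : ℕ) : E a b 0 = a := by simp [E]
@[simp] lemma E_apply1 (a b : ℕ) : E a b 1 = b := by simp [E]

lemma E_surj (e : Fin 2 →₀ ℕ) : E (e 0) (e 1) = e := by
  ext i; fin_cases i <;> simp

lemma E_le (e : Fin 2 →₀ ℕ) {a b : ℕ} : E a b ≤ e ↔ a ≤ e 0 ∧ b ≤ e 1 := by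
  rw [Finsupp.le_def]
  constructor
  · intro h; exact ⟨by simpa using h 0, by simpa using h 1⟩
  · rintro ⟨h1, h2⟩ i
    fin_cases i <;> simpa

lemma E_add (a b c d : ℕ) : E a b + E c d = E (a + c) (b + d) := by
  ext i; fin_cases i <;> simp

def mono (k : Type*) [Field k] (a b : ℕ) : MvPowerSeries (Fin 2) k :=
  MvPowerSeries.monomial (E a b) 1

def msp (k : Type*) [Field k] (D : List (ℕ × ℕ)) : Ideal (MvPowerSeries (Fin 2) k) :=
  Ideal.span {g | ∃ p ∈ D, g = mono k p.1 p.2}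

lemma mono_mem {D : List (ℕ × ℕ)} {p : ℕ × ℕ} (hp : p ∈ D) : mono k p.1 p.2 ∈ msp k D :=
  Ideal.subset_span ⟨p, hp, rfl⟩

lemma mono_mul_mono (a b c d : ℕ) :
    mono k a b * mono k c d = mono k (a + c) (b + d) := by
  simp [mono, monomial_mul_monomial, E_add]

set_option maxHeartbeats 1600000 in
lemma msp_mul (D₁ D₂ D₃ : List (ℕ × ℕ))
    (h1 : ∀ p ∈ D₁, ∀ q ∈ D₂, (p.1 + q.1, p.2 + q.2) ∈ D₃)
    (h2 : ∀ r ∈ D₃, ∃ p ∈ D₁, ∃ q ∈ D₂, r = (p.1 + q.1, p.2 + q.2)) :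
    msp k D₁ * msp k D₂ = msp k D₃ := by
  apply le_antisymm
  · rw [msp, msp, Ideal.span_mul_span', Ideal.span_le]
    rintro g ⟨g1, ⟨p, hp, rfl⟩, g2, ⟨q, hq, rfl⟩, rfl⟩
    show mono k p.1 p.2 * mono k q.1 q.2 ∈ _
    rw [mono_mul_mono]
    exact Ideal.subset_span ⟨_, h1 p hp q hq, rfl⟩
  · rw [msp, Ideal.span_le]
    rintro g ⟨r, hr, rfl⟩
    obtain ⟨p, hp, q, hq, rfl⟩ := h2 r hr
    rw [← mono_mul_mono]
    exact Ideal.mul_mem_mul (mono_mem hp) (mono_mem hq)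

lemma mem_msp {D : List (ℕ × ℕ)} {f : MvPowerSeries (Fin 2) k} :
    f ∈ msp k D ↔
      ∀ e : Fin 2 →₀ ℕ, MvPowerSeries.coeff e f ≠ 0 → ∃ p ∈ D, p.1 ≤ e 0 ∧ p.2 ≤ e 1 := by
  classical
  constructor
  · intro hf
    refine Submodule.span_induction ?_ ?_ ?_ ?_ hf
    · rintro g ⟨p, hp, rfl⟩ e he
      rw [mono, coeff_monomial] at he
      split at he
      · next h => exact ⟨p, hp, by simp [h]⟩
      · exact absurd rfl he
    · intro e he; simp at he
    · intro a b _ _ ha hb e he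
      rw [map_add] at he
      rcases (by by_contra hc; push_neg at hc; simp [hc.1, hc.2] at he :
        MvPowerSeries.coeff e a ≠ 0 ∨ MvPowerSeries.coeff e b ≠ 0) with h | h
      · exact ha e h
      · exact hb e h
    · intro a x _ hx e he
      rw [smul_eq_mul, coeff_mul] at he
      obtain ⟨uv, huv, hne⟩ := Finset.exists_ne_zero_of_sum_ne_zero he
      rw [Finset.HasAntidiagonal.mem_antidiagonal] at huv
      obtain ⟨p, hp, h1, h2⟩ := hx uv.2 (right_ne_zero_of_mul hne)
      refine ⟨p, hp, ?_, ?_⟩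
      · calc p.1 ≤ uv.2 0 := h1
          _ ≤ uv.1 0 + uv.2 0 := Nat.le_add_left _ _
          _ = e 0 := by rw [← huv]; simp
      · calc p.2 ≤ uv.2 1 := h2
          _ ≤ uv.1 1 + uv.2 1 := Nat.le_add_left _ _
          _ = e 1 := by rw [← huv]; simp
  · intro h
    induction D generalizing f with
    | nil =>
      have hf0 : f = 0 := by
        apply MvPowerSeries.ext; intro e
        by_contra he
        rw [map_zero] at he
        obtain ⟨p, hp, -⟩ := h e he
        simp at hp
      rw [hf0]; exact Ideal.zero_mem _
    | cons p D ih =>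
      set d : Fin 2 →₀ ℕ := E p.1 p.2 with hd
      let g : MvPowerSeries (Fin 2) k := fun e => MvPowerSeries.coeff (e + d) f
      let f₂ : MvPowerSeries (Fin 2) k :=
        fun e => if d ≤ e then 0 else MvPowerSeries.coeff e f
      have hg : ∀ e, MvPowerSeries.coeff e g = MvPowerSeries.coeff (e + d) f := fun _ => rfl
      have hf2 : ∀ e, MvPowerSeries.coeff e f₂
          = if d ≤ e then 0 else MvPowerSeries.coeff e f := fun _ => rfl
      have hsplit : f = mono k p.1 p.2 * g + f₂ := by
        apply MvPowerSeries.ext; intro e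
        rw [map_add, mono, coeff_monomial_mul, hf2, ← hd]
        by_cases hle : d ≤ e
        · rw [if_pos hle, if_pos hle, hg, tsub_add_cancel_of_le hle, one_mul, add_zero]
        · rw [if_neg hle, if_neg hle, zero_add]
      rw [hsplit]
      refine Ideal.add_mem _
        (Ideal.mul_mem_right _ _ (mono_mem List.mem_cons_self)) ?_
      have hsub : msp k D ≤ msp k (p :: D) :=
        Ideal.span_mono (fun g ⟨q, hq, he⟩ => ⟨q, List.mem_cons_of_mem _ hq, he⟩)
      refine hsub (ih ?_)
      intro e he
      rw [hf2] at he
      have hnle : ¬ d ≤ e := by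
        intro hle; rw [if_pos hle] at he; exact he rfl
      rw [if_neg hnle] at he
      obtain ⟨q, hq, h1, h2⟩ := h e he
      rcases List.mem_cons.1 hq with rfl | hq'
      · exact absurd ((E_le e).2 ⟨h1, h2⟩) hnle
      · exact ⟨q, hq', h1, h2⟩

end
end BFaux

namespace BFaux
noncomputable section
variable {k : Type*} [Field k]

lemma coeff_mul_mono (f : MvPowerSeries (Fin 2) k) (a b : ℕ) (e : Fin 2 →₀ ℕ) :
    MvPowerSeries.coeff e (f * mono k a b)
      = if E a b ≤ e then MvPowerSeries.coeff (e - E a b) f else 0 := by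
  rw [mono, coeff_mul_monomial]
  split <;> simp

lemma mul_mono_mem_msp {D : List (ℕ × ℕ)} {f : MvPowerSeries (Fin 2) k} (a b : ℕ) :
    f * mono k a b ∈ msp k D ↔
      ∀ e : Fin 2 →₀ ℕ, MvPowerSeries.coeff e f ≠ 0 →
        ∃ p ∈ D, p.1 ≤ e 0 + a ∧ p.2 ≤ e 1 + b := by
  rw [mem_msp]
  constructor
  · intro h e he
    have hc : MvPowerSeries.coeff (e + E a b) (f * mono k a b) ≠ 0 := by
      rw [mono, coeff_add_mul_monomial, mul_one]; exact he
    obtain ⟨p, hp, h1, h2⟩ := h _ hc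
    have e0 : (e + E a b) 0 = e 0 + a := by simp
    have e1 : (e + E a b) 1 = e 1 + b := by simp
    rw [e0] at h1; rw [e1] at h2
    exact ⟨p, hp, h1, h2⟩
  · intro h e he
    rw [coeff_mul_mono] at he
    split at he
    · next hle =>
      obtain ⟨p, hp, h1, h2⟩ := h _ he
      have hle' := (E_le e).1 hle
      have e0 : (e - E a b) 0 = e 0 - a := by simp [Finsupp.tsub_apply]
      have e1 : (e - E a b) 1 = e 1 - b := by simp [Finsupp.tsub_apply]
      rw [e0] at h1; rw [e1] at h2
      exact ⟨p, hp, by omega, by omega⟩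
    · exact absurd rfl he

lemma mem_colon_msp {D G : List (ℕ × ℕ)} {f : MvPowerSeries (Fin 2) k} :
    f ∈ Submodule.colon (msp k D) (msp k G) ↔
      ∀ q ∈ G, f * mono k q.1 q.2 ∈ msp k D := by
  rw [Submodule.mem_colon]
  constructor
  · intro hf q hq
    have := hf _ (mono_mem hq)
    rwa [smul_eq_mul] at this
  · intro hf p hp
    refine Submodule.span_induction (p := fun x _ => f • x ∈ msp k D) ?_ ?_ ?_ ?_ hp
    · rintro g ⟨q, hq, rfl⟩
      rw [smul_eq_mul]; exact hf q hq
    · show f • (0 : MvPowerSeries (Fin 2) k) ∈ msp k D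
      rw [smul_zero]; exact Ideal.zero_mem _
    · intro a b _ _ ha hb; rw [smul_add]; exact Ideal.add_mem _ ha hb
    · intro a x _ hx
      rw [smul_comm]
      exact Submodule.smul_mem _ a hx

lemma msp_le_msp {D D' : List (ℕ × ℕ)}
    (h : ∀ p ∈ D, ∃ q ∈ D', q.1 ≤ p.1 ∧ q.2 ≤ p.2) : msp k D ≤ msp k D' := by
  rw [msp, Ideal.span_le]
  rintro g ⟨p, hp, rfl⟩
  show mono k p.1 p.2 ∈ msp k D'
  rw [mem_msp]
  intro e he
  rw [mono, coeff_monomial] at he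
  split at he
  · next h' =>
    obtain ⟨q, hq, h1, h2⟩ := h p hp
    exact ⟨q, hq, by simp [h', h1], by simp [h', h2]⟩
  · exact absurd rfl he

lemma mono_X0_pow (n : ℕ) : (X 0 : MvPowerSeries (Fin 2) k) ^ n = mono k n 0 := by
  have h : E n 0 = Finsupp.single (0 : Fin 2) n := by
    ext i; fin_cases i <;> simp [E, Finsupp.single_apply]
  rw [X_pow_eq, mono, h]

lemma mono_X1_pow (n : ℕ) : (X 1 : MvPowerSeries (Fin 2) k) ^ n = mono k 0 n := by
  have h : E 0 n = Finsupp.single (1 : Fin 2) n := by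
    ext i; fin_cases i <;> simp [E, Finsupp.single_apply]
  rw [X_pow_eq, mono, h]

lemma mono_one_zero : mono k 1 0 = X 0 := by
  rw [← mono_X0_pow 1, pow_one]

lemma mono_zero_one : mono k 0 1 = X 1 := by
  rw [← mono_X1_pow 1, pow_one]

lemma span_m : Ideal.span {(X 0 : MvPowerSeries (Fin 2) k), X 1}
    = msp k [(1,0),(0,1)] := by
  rw [msp]
  congr 1
  ext g
  simp only [Set.mem_insert_iff, Set.mem_singleton_iff, Set.mem_setOf_eq,
    List.mem_cons, List.not_mem_nil, or_false]
  constructor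
  · rintro (rfl | rfl)
    · exact ⟨(1,0), Or.inl rfl, mono_one_zero.symm⟩
    · exact ⟨(0,1), Or.inr rfl, mono_zero_one.symm⟩
  · rintro ⟨p, (rfl | rfl), rfl⟩
    · exact Or.inl mono_one_zero
    · exact Or.inr mono_zero_one

lemma span_I : Ideal.span {(X 0 : MvPowerSeries (Fin 2) k) ^ 3, X 0 ^ 2 * X 1 ^ 2, X 1 ^ 3}
    = msp k [(3,0),(2,2),(0,3)] := by
  have h1 : (X 0 : MvPowerSeries (Fin 2) k) ^ 3 = mono k 3 0 := mono_X0_pow 3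
  have h2 : (X 0 : MvPowerSeries (Fin 2) k) ^ 2 * X 1 ^ 2 = mono k 2 2 := by
    rw [mono_X0_pow, mono_X1_pow, mono_mul_mono]
  have h3 : (X 1 : MvPowerSeries (Fin 2) k) ^ 3 = mono k 0 3 := mono_X1_pow 3
  rw [msp, h1, h2, h3]
  congr 1
  ext g
  simp only [Set.mem_insert_iff, Set.mem_singleton_iff, Set.mem_setOf_eq,
    List.mem_cons, List.not_mem_nil, or_false]
  constructor
  · rintro (rfl | rfl | rfl)
    · exact ⟨(3,0), Or.inl rfl, rfl⟩
    · exact ⟨(2,2), Or.inr (Or.inl rfl), rfl⟩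
    · exact ⟨(0,3), Or.inr (Or.inr rfl), rfl⟩
  · rintro ⟨p, (rfl | rfl | rfl), rfl⟩
    · exact Or.inl rfl
    · exact Or.inr (Or.inl rfl)
    · exact Or.inr (Or.inr rfl)

end
end BFaux

open BFaux

/-- In `R = k[[x,y]]` with `m = (x,y)`, the ideal `I = (x³, x²y², y³)` satisfies
`(m²·I :_R m²) = m³`, which strictly contains `I`, while `(m·I :_R m) = I`. -/
theorem bf_example {k : Type*} [Field k] :
    let x : MvPowerSeries (Fin 2) k := X 0
    let y : MvPowerSeries (Fin 2) k := X 1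
    let m : Ideal (MvPowerSeries (Fin 2) k) := Ideal.span {x, y}
    let I : Ideal (MvPowerSeries (Fin 2) k) := Ideal.span {x ^ 3, x ^ 2 * y ^ 2, y ^ 3}
    Submodule.colon ((m ^ 2 * I : Ideal (MvPowerSeries (Fin 2) k)))
        ((m ^ 2 : Ideal (MvPowerSeries (Fin 2) k))) = m ^ 3 ∧
      I < Submodule.colon ((m ^ 2 * I : Ideal (MvPowerSeries (Fin 2) k)))
        ((m ^ 2 : Ideal (MvPowerSeries (Fin 2) k))) ∧
      Submodule.colon ((m * I : Ideal (MvPowerSeries (Fin 2) k))) m = I := by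
  intro x y m I
  have hm : m = msp k [(1,0),(0,1)] := span_m
  have hI : I = msp k [(3,0),(2,2),(0,3)] := span_I
  have hm2 : m ^ 2 = msp k [(2,0),(1,1),(0,2)] := by
    rw [pow_two, hm, msp_mul [(1,0),(0,1)] [(1,0),(0,1)] [(2,0),(1,1),(0,2)]
      (by decide) (by decide)]
  have hm3 : m ^ 3 = msp k [(3,0),(2,1),(1,2),(0,3)] := by
    rw [pow_succ, hm2, hm, msp_mul [(2,0),(1,1),(0,2)] [(1,0),(0,1)]
      [(3,0),(2,1),(1,2),(0,3)] (by decide) (by decide)]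
  have hm2I : m ^ 2 * I
      = msp k [(5,0),(4,2),(2,3),(4,1),(3,3),(1,4),(3,2),(2,4),(0,5)] := by
    rw [hm2, hI, msp_mul [(2,0),(1,1),(0,2)] [(3,0),(2,2),(0,3)]
      [(5,0),(4,2),(2,3),(4,1),(3,3),(1,4),(3,2),(2,4),(0,5)] (by decide) (by decide)]
  have hmI : m * I = msp k [(4,0),(3,2),(1,3),(3,1),(2,3),(0,4)] := by
    rw [hm, hI, msp_mul [(1,0),(0,1)] [(3,0),(2,2),(0,3)]
      [(4,0),(3,2),(1,3),(3,1),(2,3),(0,4)] (by decide) (by decide)]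
  have key1 : Submodule.colon (m ^ 2 * I) ((m ^ 2 : Ideal (MvPowerSeries (Fin 2) k))) = m ^ 3 := by
    rw [hm2I, hm2, hm3]
    ext f
    rw [mem_colon_msp, mem_msp]
    constructor
    · intro h e he
      have h2 := (mul_mono_mem_msp 2 0).1 (h (2,0) (by simp)) e he
      simp only [List.exists_mem_cons_iff, List.not_mem_nil, false_and, exists_false,
        or_false] at h2 ⊢
      omega
    · intro h q hq
      rw [mul_mono_mem_msp]
      intro e he
      have h2 := h e he
      fin_cases hq <;>
        (simp only [List.exists_mem_cons_iff, List.not_mem_nil, false_and, exists_false,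
          or_false] at h2 ⊢ <;> omega)
  have key3 : Submodule.colon (m * I) m = I := by
    rw [hmI, hm, hI]
    ext f
    rw [mem_colon_msp, mem_msp]
    constructor
    · intro h e he
      have h1 := (mul_mono_mem_msp 1 0).1 (h (1,0) (by simp)) e he
      have h2 := (mul_mono_mem_msp 0 1).1 (h (0,1) (by simp)) e he
      simp only [List.exists_mem_cons_iff, List.not_mem_nil, false_and, exists_false,
        or_false] at h1 h2 ⊢
      omega
    · intro h q hq
      rw [mul_mono_mem_msp]
      intro e he
      have h2 := h e he
      fin_cases hq <;>
        (simp only [List.exists_mem_cons_iff, List.not_mem_nil, false_and, exists_false,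
          or_false] at h2 ⊢ <;> omega)
  refine ⟨key1, ?_, key3⟩
  rw [key1]
  rw [SetLike.lt_iff_le_and_exists]
  constructor
  · rw [hI, hm3]
    exact msp_le_msp (by decide)
  · refine ⟨mono k 2 1, ?_, ?_⟩
    · rw [hm3]
      exact mono_mem (p := (2,1)) (by simp)
    · rw [hI]
      intro hc
      have hco : MvPowerSeries.coeff (E 2 1) (mono k 2 1) ≠ 0 := by
        rw [mono, coeff_monomial_same]; exact one_ne_zero
      obtain ⟨p, hp, h1, h2⟩ := mem_msp.1 hc (E 2 1) hco
      fin_cases hp <;> simp_all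
end

section
/- Let (R,m) be a Noetherian local ring, J an ideal, and let L ⊆ N ⊆ M be Artinian R-modules such that J•((L :_N m) :_M J) ⊆ L. Then (L :_M J) = (N :_M J), and hence J•(L :_M J) = J•(N :_M J). (That is, the J-basically empty interior is a Nakayama interior.) -/
/-- Socle lemma: if `P < K` in an Artinian module over a Noetherian local ring,
there is `x ∈ K \ P` with `m • x ⊆ P`. -/
lemma exists_socle_elt {R M : Type*} [CommRing R] [IsLocalRing R]
    [AddCommGroup M] [Module R M] [IsArtinian R M]
    (P K : Submodule R M) (h : P < K) :
    ∃ x ∈ K, x ∉ P ∧ ∀ r ∈ IsLocalRing.maximalIdeal R, r • x ∈ P := by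
  let Q := M ⧸ P
  let K' : Submodule R Q := K.map P.mkQ
  have hK' : K' ≠ ⊥ := by
    obtain ⟨y, hyK, hyP⟩ := SetLike.exists_of_lt h
    intro hb
    have : P.mkQ y ∈ K' := Submodule.mem_map_of_mem hyK
    rw [hb, Submodule.mem_bot, Submodule.mkQ_apply, Submodule.Quotient.mk_eq_zero] at this
    exact hyP this
  obtain ⟨S, ⟨hSne, hSle⟩, hSmin⟩ :=
    IsArtinian.set_has_minimal {S : Submodule R Q | S ≠ ⊥ ∧ S ≤ K'} ⟨K', hK', le_refl _⟩
  -- S is f.g. (cyclic)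
  obtain ⟨x, hxS, hx0⟩ := Submodule.exists_mem_ne_zero_of_ne_bot hSne
  have hspan : Submodule.span R {x} = S := by
    by_contra hne
    exact hSmin _ ⟨by simpa using hx0, le_trans ((Submodule.span_singleton_le_iff_mem x S).2 hxS) hSle⟩
      (lt_of_le_of_ne ((Submodule.span_singleton_le_iff_mem x S).2 hxS) hne)
  have hSfg : S.FG := hspan ▸ ⟨{x}, by simp⟩
  -- m • S = ⊥
  have hms : IsLocalRing.maximalIdeal R • S = ⊥ := by
    by_contra hne
    have hle : IsLocalRing.maximalIdeal R • S ≤ S := Submodule.smul_le_right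
    rcases eq_or_lt_of_le hle with heq | hlt
    · have := Submodule.eq_bot_of_le_smul_of_le_jacobson_bot (IsLocalRing.maximalIdeal R) S hSfg
        heq.ge (by rw [IsLocalRing.jacobson_eq_maximalIdeal ⊥ bot_ne_top])
      exact hSne this
    · exact hSmin _ ⟨hne, le_trans hle hSle⟩ hlt
  -- lift x
  have : x ∈ K' := hSle hxS
  obtain ⟨y, hyK, hy⟩ := this
  refine ⟨y, hyK, ?_, ?_⟩
  · intro hyP
    apply hx0
    rw [← hy, Submodule.mkQ_apply, Submodule.Quotient.mk_eq_zero]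
    exact hyP
  · intro r hr
    have : r • x ∈ IsLocalRing.maximalIdeal R • S := Submodule.smul_mem_smul hr hxS
    rw [hms, Submodule.mem_bot] at this
    rw [← hy, ← map_smul, Submodule.mkQ_apply, Submodule.Quotient.mk_eq_zero] at this
    exact this

/-- The J-basically empty interior is a Nakayama interior on Artinian modules
over a Noetherian local ring. -/
theorem jbe_nakayama {R M : Type*} [CommRing R] [IsNoetherianRing R] [IsLocalRing R]
    [AddCommGroup M] [Module R M] [IsArtinian R M]
    (J : Ideal R) (L N : Submodule R M) (hLN : L ≤ N)
    (h : J • (((L.icolon (IsLocalRing.maximalIdeal R)) ⊓ N).icolon J) ≤ L) :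
    L.icolon J = N.icolon J ∧ J • (L.icolon J) = J • (N.icolon J) := by
  have hle : L.icolon J ≤ N.icolon J := fun x hx r hr => hLN (hx r hr)
  have heq : L.icolon J = N.icolon J := by
    refine le_antisymm hle (by_contra fun h' => ?_)
    have hlt := lt_of_le_not_ge hle h'
    obtain ⟨x, hxK, hxP, hsoc⟩ := exists_socle_elt (L.icolon J) (N.icolon J) hlt
    apply hxP
    intro j hj
    have hxic : x ∈ ((L.icolon (IsLocalRing.maximalIdeal R)) ⊓ N).icolon J := by
      intro j' hj'
      refine Submodule.mem_inf.2 ⟨?_, hxK j' hj'⟩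
      intro r hr
      rw [smul_comm]
      exact hsoc r hr j' hj'
    exact h (Submodule.smul_mem_smul hj hxic)
  exact ⟨heq, by rw [heq]⟩
end

section
/- In R = k[[t²,t³]] with m = (t²,t³): for every n ≥ 2, the m-basically full closure of the principal ideal (tⁿ + a·tⁿ⁺¹) (for any a ∈ k) equals (tⁿ, tⁿ⁺¹); that is, (m·(tⁿ + a·tⁿ⁺¹) :_R m) = (tⁿ, tⁿ⁺¹). -/
set_option synthInstance.maxHeartbeats 1000000
set_option maxHeartbeats 1000000

open PowerSeries

/-- The complete numerical semigroup ring `k[[t²,t³]]`, realized as the subalgebra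
of `k[[t]]` consisting of power series whose coefficient of `t` vanishes. -/
def SemigroupRing (k : Type*) [Field k] : Subalgebra k (PowerSeries k) where
  carrier := {f | coeff 1 f = 0}
  mul_mem' := by
    intro a b ha hb
    simp only [Set.mem_setOf_eq] at *
    rw [coeff_mul, Finset.Nat.sum_antidiagonal_eq_sum_range_succ_mk]
    simp [Finset.sum_range_succ, ha, hb]
  add_mem' := by
    intro a b ha hb
    simp only [Set.mem_setOf_eq] at *
    simp [ha, hb]
  algebraMap_mem' := by
    intro r
    show coeff 1 ((algebraMap k (PowerSeries k)) r) = 0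
    rw [PowerSeries.algebraMap_apply, coeff_C]
    simp

/-- `tⁿ` as an element of `k[[t²,t³]]` (defined to be `0` when `n = 1`). -/
noncomputable def tp (k : Type*) [Field k] (n : ℕ) : SemigroupRing k :=
  if h : n = 1 then 0
  else ⟨PowerSeries.X ^ n, by
    have : coeff 1 ((X : PowerSeries k) ^ n) = 0 := by simp [coeff_X_pow, Ne.symm h]
    exact this⟩

lemma tp_val {k : Type*} [Field k] (n : ℕ) (h : n ≠ 1) :
    ((tp k n : SemigroupRing k) : PowerSeries k) = X ^ n := by
  simp [tp, h]

lemma mem_semigroupRing {k : Type*} [Field k] (f : PowerSeries k) :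
    f ∈ SemigroupRing k ↔ coeff 1 f = 0 := Iff.rfl

lemma mem_span_iff {k : Type*} [Field k] (n : ℕ) (hn : 2 ≤ n) (g : SemigroupRing k) :
    g ∈ Ideal.span {tp k n, tp k (n + 1)} ↔
      (X : PowerSeries k) ^ n ∣ (g : PowerSeries k) := by
  have h1 : n ≠ 1 := by omega
  have h2 : n + 1 ≠ 1 := by omega
  constructor
  · rw [Ideal.mem_span_pair]
    rintro ⟨x, y, rfl⟩
    have : ((x * tp k n + y * tp k (n + 1) : SemigroupRing k) : PowerSeries k)
        = (x : PowerSeries k) * X ^ n + (y : PowerSeries k) * X ^ (n + 1) := by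
      push_cast [tp_val n h1, tp_val (n + 1) h2]
      ring
    rw [this]
    exact dvd_add (dvd_mul_left _ _) ((pow_dvd_pow X (by omega)).trans (dvd_mul_left _ _))
  · rintro ⟨h, hh⟩
    set c := coeff 1 h with hc
    refine Ideal.mem_span_pair.mpr ⟨⟨h - C c * X, ?_⟩, ⟨C c, ?_⟩, ?_⟩
    · show coeff 1 (h - C c * X) = 0
      simp [coeff_C_mul, hc]
    · show coeff 1 (C c) = 0
      simp [coeff_C]
    · apply Subtype.ext
      push_cast [tp_val n h1, tp_val (n + 1) h2]
      rw [hh]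
      ring

lemma f_val {k : Type*} [Field k] (n : ℕ) (hn : 2 ≤ n) (a : k) :
    ((tp k n + a • tp k (n + 1) : SemigroupRing k) : PowerSeries k)
      = X ^ n * (1 + C a * X) := by
  have h1 : n ≠ 1 := by omega
  have h2 : n + 1 ≠ 1 := by omega
  push_cast [tp_val n h1, tp_val (n + 1) h2]
  rw [smul_eq_C_mul]
  ring

lemma mem_mI_iff {k : Type*} [Field k] (n : ℕ) (hn : 2 ≤ n) (a : k) (g : SemigroupRing k) :
    g ∈ (Ideal.span {tp k 2, tp k 3} : Ideal (SemigroupRing k)) *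
          Ideal.span {tp k n + a • tp k (n + 1)} ↔
      (X : PowerSeries k) ^ (n + 2) ∣ (g : PowerSeries k) := by
  set f : SemigroupRing k := tp k n + a • tp k (n + 1) with hf
  constructor
  · intro hg
    have key : (Ideal.span {tp k 2, tp k 3} : Ideal (SemigroupRing k)) * Ideal.span {f} ≤
        Ideal.comap (SemigroupRing k).val.toRingHom
          (Ideal.span {(X : PowerSeries k) ^ (n + 2)}) := by
      rw [Ideal.mul_le]
      intro r hr s hs
      rw [Ideal.mem_comap, Ideal.mem_span_singleton]
      show (X : PowerSeries k) ^ (n + 2) ∣ ((r * s : SemigroupRing k) : PowerSeries k)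
      obtain ⟨w, hw⟩ := Ideal.mem_span_singleton.mp hs
      have hr2 : (X : PowerSeries k) ^ 2 ∣ (r : PowerSeries k) :=
        (mem_span_iff 2 le_rfl r).mp hr
      have : ((r * s : SemigroupRing k) : PowerSeries k)
          = (r : PowerSeries k) * ((f : PowerSeries k) * (w : PowerSeries k)) := by
        push_cast [hw]; ring
      rw [this, f_val n hn a]
      obtain ⟨r', hr'⟩ := hr2
      refine ⟨r' * ((1 + C a * X) * (w : PowerSeries k)), ?_⟩
      rw [hr']
      ring
    have := key hg
    rwa [Ideal.mem_comap, Ideal.mem_span_singleton] at this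
  · rintro ⟨h, hh⟩
    set u : PowerSeries k := 1 + C a * X with hu
    have hcu : constantCoeff u = 1 := by simp [hu]
    set v : PowerSeries k := u.invOfUnit 1 with hv
    have huv : u * v = 1 := PowerSeries.mul_invOfUnit u 1 (by simp [hcu])
    have hwmem : coeff 1 ((X : PowerSeries k) ^ 2 * (h * v)) = 0 := by
      have : (X : PowerSeries k) ^ 2 ∣ (X : PowerSeries k) ^ 2 * (h * v) :=
        Dvd.intro _ rfl
      exact (X_pow_dvd_iff.mp this) 1 one_lt_two
    set W : SemigroupRing k := ⟨(X : PowerSeries k) ^ 2 * (h * v), hwmem⟩ with hW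
    have hWm : W ∈ (Ideal.span {tp k 2, tp k 3} : Ideal (SemigroupRing k)) :=
      (mem_span_iff 2 le_rfl W).mpr ⟨h * v, rfl⟩
    have hgWf : g = W * f := by
      apply Subtype.ext
      rw [hf]
      push_cast [f_val n hn a]
      rw [hh]
      linear_combination (-(X : PowerSeries k) ^ (n + 2) * h) * huv
    rw [hgWf]
    exact Ideal.mul_mem_mul hWm (Ideal.subset_span rfl)

/-- In `R = k[[t²,t³]]` with `m = (t²,t³)`: for every `n ≥ 2` and `a ∈ k`, the
m-basically full closure of `(tⁿ + a·tⁿ⁺¹)` equals `(tⁿ, tⁿ⁺¹)`. -/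
theorem semigroup_bf_closure_principal {k : Type*} [Field k] (n : ℕ) (hn : 2 ≤ n)
    (a : k) :
    Submodule.colon
        ((Ideal.span {tp k 2, tp k 3} : Ideal (SemigroupRing k)) *
          Ideal.span {tp k n + a • tp k (n + 1)})
        (Ideal.span {tp k 2, tp k 3}) =
      Ideal.span {tp k n, tp k (n + 1)} := by
  ext g
  rw [Submodule.mem_colon, mem_span_iff n hn]
  constructor
  · intro H
    have h2 : tp k 2 ∈ (Ideal.span {tp k 2, tp k 3} : Ideal (SemigroupRing k)) :=
      Ideal.subset_span (Set.mem_insert _ _)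
    have := (mem_mI_iff n hn a _).mp (H _ h2)
    have hval : ((g • tp k 2 : SemigroupRing k) : PowerSeries k)
        = (g : PowerSeries k) * X ^ 2 := by
      rw [smul_eq_mul]; push_cast [tp_val 2 (by norm_num)]; ring
    rw [hval] at this
    obtain ⟨c, hc⟩ := this
    refine ⟨c, ?_⟩
    have h2ne : (X : PowerSeries k) ^ 2 ≠ 0 := pow_ne_zero _ X_ne_zero
    apply mul_right_cancel₀ h2ne
    rw [hc]
    ring
  · intro H x hx
    rw [mem_mI_iff n hn a]
    have hx2 : (X : PowerSeries k) ^ 2 ∣ (x : PowerSeries k) :=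
      (mem_span_iff 2 le_rfl x).mp hx
    have hval : ((g • x : SemigroupRing k) : PowerSeries k)
        = (g : PowerSeries k) * (x : PowerSeries k) := by
      rw [smul_eq_mul]; push_cast; ring
    rw [hval, pow_add]
    exact mul_dvd_mul H hx2
end
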